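/- (Symmetry lemma.) Let G be a finite graph and τ : G → G a graph automorphism such that τ² is the identity and for every vertex v of G, the vertices v and τ(v) are not joined by an edge of G. Let G^τ be the subgraph of G consisting of the vertices and edges fixed by τ. Then ν(G) = ν(G^τ). -/

import Mathlib

noncomputable section
open scoped Classical

/-- A finite multigraph with vertices and edge labels drawn from `ℕ`;
loops and multiple edges are allowed.  `ends e` is the unordered pair of
endpoints of the edge labelled `e`. -/
structure MGraph where
  verts : Finset ℕ
  edges : Finset ℕ
  ends : ℕ → Sym2 ℕ

namespace MGraph

/-- Well-formedness: every edge joins vertices of the graph. -/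
def WF (G : MGraph) : Prop := ∀ e ∈ G.edges, ∀ v ∈ G.ends e, v ∈ G.verts

/-- Delete the edge labelled `e`. -/
def delEdge (G : MGraph) (e : ℕ) : MGraph := ⟨G.verts, G.edges.erase e, G.ends⟩

/-- Delete the vertex `v` together with all incident edges. -/
def delVert (G : MGraph) (v : ℕ) : MGraph :=
  ⟨G.verts.erase v, G.edges.filter (fun e => ¬ v ∈ G.ends e), G.ends⟩

def size (G : MGraph) : ℕ := G.verts.card + G.edges.card

/-- Minimal excludant of a finite set of naturals. -/
def mex (s : Finset ℕ) : ℕ := sInf {n : ℕ | n ∉ s}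

/-- Grundy-value computation with fuel; every move strictly decreases `size`,
so fuel `size G` computes the true Sprague–Grundy value of `G`. -/
def nimAux : ℕ → MGraph → ℕ
  | 0, _ => 0
  | fuel + 1, G =>
      mex ((G.verts.image fun v => nimAux fuel (G.delVert v)) ∪
           (G.edges.image fun e => nimAux fuel (G.delEdge e)))

/-- The nim-value (Sprague–Grundy value) of the vertex-and-edge deletion game on
`G` : `ν(∅) = 0` and `ν(G) = mex {ν(H) : H is obtained from G by a single move}`,
where a move deletes one edge, or one vertex with all incident edges. -/
def nim (G : MGraph) : ℕ := nimAux G.size G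

/-- The parity function `φ(G) = (|V| mod 2) + 2 (|E| mod 2)`. -/
def phi (G : MGraph) : ℕ := G.verts.card % 2 + 2 * (G.edges.card % 2)

/-- `u` and `v` are joined by an edge. -/
def Adj (G : MGraph) (u v : ℕ) : Prop := ∃ e ∈ G.edges, G.ends e = s(u, v)

def Reach (G : MGraph) (u v : ℕ) : Prop := Relation.ReflTransGen G.Adj u v

def Connected (G : MGraph) : Prop :=
  G.verts.Nonempty ∧ ∀ u ∈ G.verts, ∀ v ∈ G.verts, G.Reach u v

/-- A (finite) tree: a connected well-formed graph with `|E| + 1 = |V|`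
(this forces the absence of loops, multiple edges and cycles). -/
def IsTree (G : MGraph) : Prop := G.WF ∧ G.Connected ∧ G.edges.card + 1 = G.verts.card

/-- `G` is a cycle graph of length `n ≥ 2`. -/
def IsCycle (G : MGraph) (n : ℕ) : Prop :=
  2 ≤ n ∧ ∃ f g : ℕ → ℕ,
    Set.InjOn f (Set.Iio n) ∧ Set.InjOn g (Set.Iio n) ∧
    G.verts = (Finset.range n).image f ∧
    G.edges = (Finset.range n).image g ∧
    ∀ i < n, G.ends (g i) = s(f i, f ((i + 1) % n))

/-- `G` is a cycle of odd length (hence of length at least 3). -/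
def IsOddCycle (G : MGraph) : Prop := ∃ n, Odd n ∧ G.IsCycle n

/-- Induced subgraph on a set of vertices. -/
def induce (G : MGraph) (S : Finset ℕ) : MGraph :=
  ⟨S, G.edges.filter (fun e => ∀ v ∈ G.ends e, v ∈ S), G.ends⟩

/-- The connected component of `v` in `G`. -/
def component (G : MGraph) (v : ℕ) : MGraph :=
  G.induce (G.verts.filter fun u => G.Reach v u)

/-- Two `MGraph`s are the same graph (same vertices, edges and incidence). -/
def SameGraph (G H : MGraph) : Prop :=
  G.verts = H.verts ∧ G.edges = H.edges ∧ ∀ e ∈ G.edges, G.ends e = H.ends e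

/-- An isomorphism of multigraphs. -/
structure Iso (G H : MGraph) where
  vmap : ℕ → ℕ
  emap : ℕ → ℕ
  vmap_bij : Set.BijOn vmap (G.verts : Set ℕ) (H.verts : Set ℕ)
  emap_bij : Set.BijOn emap (G.edges : Set ℕ) (H.edges : Set ℕ)
  ends_eq : ∀ e ∈ G.edges, H.ends (emap e) = (G.ends e).map vmap

/-- The data witnessing a cancellation at the vertex `s` : `G` is the disjoint
union of a graph `G'` containing `s` and two isomorphic graphs, with vertex
sets `B` and `C`, together with two edges `e₁`, `e₂` joining `s` to
corresponding vertices `v₁ ∈ B`, `v₂ ∈ C`. -/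
def Cancellation (G : MGraph) (s : ℕ) (B C : Finset ℕ) : Prop :=
  ∃ e₁ e₂ v₁ v₂ : ℕ,
    s ∈ G.verts ∧ s ∉ B ∧ s ∉ C ∧ Disjoint B C ∧
    B ⊆ G.verts ∧ C ⊆ G.verts ∧ v₁ ∈ B ∧ v₂ ∈ C ∧
    e₁ ∈ G.edges ∧ e₂ ∈ G.edges ∧ e₁ ≠ e₂ ∧
    G.ends e₁ = s(s, v₁) ∧ G.ends e₂ = s(s, v₂) ∧
    (∀ e ∈ G.edges, e = e₁ ∨ e = e₂ ∨ (∀ v ∈ G.ends e, v ∈ B) ∨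
      (∀ v ∈ G.ends e, v ∈ C) ∨ (∀ v ∈ G.ends e, v ∈ G.verts \ (B ∪ C))) ∧
    ∃ φ : Iso (G.induce B) (G.induce C), φ.vmap v₁ = v₂

def HasCancellationAt (G : MGraph) (s : ℕ) : Prop := ∃ B C, G.Cancellation s B C

/-- A graph is reduced if no cancellation is possible. -/
def Reduced (G : MGraph) : Prop := ∀ s, ¬ G.HasCancellationAt s

/-- Performing one cancellation. -/
def CancelStep (G G' : MGraph) : Prop :=
  ∃ s B C, G.Cancellation s B C ∧ G' = G.induce (G.verts \ (B ∪ C))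

/-- `G` reduces to `H` by a (possibly empty) sequence of cancellations. -/
def ReducesTo (G H : MGraph) : Prop := Relation.ReflTransGen CancelStep G H

/-- `G` consists of the odd cycle `C` attached to the tree `T` at the single
vertex `A`. -/
def CycleWithTreeAt (G C T : MGraph) (A : ℕ) : Prop :=
  C.IsOddCycle ∧ T.IsTree ∧
  C.verts ∩ T.verts = {A} ∧
  Disjoint C.edges T.edges ∧
  G.verts = C.verts ∪ T.verts ∧
  G.edges = C.edges ∪ T.edges ∧
  (∀ e ∈ C.edges, G.ends e = C.ends e) ∧
  (∀ e ∈ T.edges, G.ends e = T.ends e)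

/-- For a graph `G` containing the odd cycle `C` attached to the rest of the
graph at the vertex `A` : the vertex `v` (outside the cycle) is telescoping if,
after deleting `v`, the connected component of `A` reduces by repeatedly
performing cancellations to exactly the cycle `C`. -/
def Telescoping (G C : MGraph) (A v : ℕ) : Prop :=
  v ∈ G.verts ∧ v ∉ C.verts ∧
  ∃ H, ReducesTo ((G.delVert v).component A) H ∧ H.SameGraph C

/-- The degree of the vertex `v`; a loop contributes `2`. -/
def degree (G : MGraph) (v : ℕ) : ℕ :=
  ∑ e ∈ G.edges,
    (if G.ends e = s(v, v) then 2 else if v ∈ G.ends e then 1 else 0)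

def NoLoops (G : MGraph) : Prop := ∀ e ∈ G.edges, ¬ (G.ends e).IsDiag

def IsSubgraph (H G : MGraph) : Prop :=
  H.verts ⊆ G.verts ∧ H.edges ⊆ G.edges ∧ ∀ e ∈ H.edges, H.ends e = G.ends e

/-- `G` contains the odd cycle `C` and no other cycles (of length ≥ 2). -/
def UniqueOddCycle (G C : MGraph) : Prop :=
  C.IsSubgraph G ∧ C.IsOddCycle ∧
  ∀ (C' : MGraph) (n : ℕ), C'.IsSubgraph G → C'.IsCycle n → C'.SameGraph C

/-- `G` is bipartite (two-colourable); in particular it has no loops. -/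
def Bipartite (G : MGraph) : Prop :=
  ∃ c : ℕ → Bool, ∀ e ∈ G.edges, ∀ u v : ℕ, G.ends e = s(u, v) → c u ≠ c v

/-- `G` is a path of length `z` (i.e. with `z` edges) from `P` to `Q`. -/
def IsPath (G : MGraph) (P Q z : ℕ) : Prop :=
  ∃ f g : ℕ → ℕ,
    Set.InjOn f (Set.Iio (z + 1)) ∧ Set.InjOn g (Set.Iio z) ∧
    f 0 = P ∧ f z = Q ∧
    G.verts = (Finset.range (z + 1)).image f ∧
    G.edges = (Finset.range z).image g ∧
    ∀ i < z, G.ends (g i) = s(f i, f (i + 1))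

/-- There is a walk of length `n` from `u` to `v` in `G`. -/
def WalkLen (G : MGraph) (u v n : ℕ) : Prop :=
  ∃ f : ℕ → ℕ, f 0 = u ∧ f n = v ∧ ∀ i < n, G.Adj (f i) (f (i + 1))

/-- Graph distance between two vertices. -/
def edist (G : MGraph) (u v : ℕ) : ℕ := sInf {n | G.WalkLen u v n}

end MGraph

namespace MGraph

/-- The subgraph `G^τ` of `G` on which the automorphism `τ` acts as the
identity: the fixed vertices together with the fixed edges. -/
def fixedSubgraph (G : MGraph) (τ : Iso G G) : MGraph :=
  ⟨G.verts.filter (fun v => τ.vmap v = v), G.edges.filter (fun e => τ.emap e = e), G.ends⟩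

/-! ### Auxiliary lemmas for the symmetry lemma -/

lemma ext' {G H : MGraph} (h1 : G.verts = H.verts) (h2 : G.edges = H.edges)
    (h3 : G.ends = H.ends) : G = H := by
  cases G; cases H; cases h1; cases h2; cases h3; rfl

/-! #### mex -/

lemma mex_not_mem (s : Finset ℕ) : mex s ∉ s := by
  have hne : {n : ℕ | n ∉ s}.Nonempty := by
    refine ⟨s.sup id + 1, fun h => ?_⟩
    have h2 : s.sup id + 1 ≤ s.sup id := Finset.le_sup (f := id) h
    omega
  exact Nat.sInf_mem hne

lemma mem_of_lt_mex {s : Finset ℕ} {k : ℕ} (h : k < mex s) : k ∈ s := by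
  by_contra hk
  exact not_le.mpr h (Nat.sInf_le hk)

lemma mex_eq {s : Finset ℕ} {m : ℕ} (h1 : m ∉ s) (h2 : ∀ k < m, k ∈ s) : mex s = m := by
  refine le_antisymm (Nat.sInf_le h1) ?_
  by_contra h
  push_neg at h
  exact mex_not_mem s (h2 _ h)

lemma mex_empty : mex (∅ : Finset ℕ) = 0 :=
  mex_eq (by simp) (fun k hk => absurd hk (Nat.not_lt_zero k))

/-! #### size -/

lemma size_delVert_lt {G : MGraph} {v : ℕ} (h : v ∈ G.verts) :
    (G.delVert v).size < G.size := by
  have h1 : (G.verts.erase v).card < G.verts.card := Finset.card_erase_lt_of_mem h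
  have h2 : (G.edges.filter (fun e => ¬ v ∈ G.ends e)).card ≤ G.edges.card :=
    Finset.card_filter_le _ _
  simp only [size, delVert]
  omega

lemma size_delEdge_lt {G : MGraph} {e : ℕ} (h : e ∈ G.edges) :
    (G.delEdge e).size < G.size := by
  have h1 : (G.edges.erase e).card < G.edges.card := Finset.card_erase_lt_of_mem h
  simp only [size, delEdge]
  omega

/-! #### nimAux stability and the recursion for nim -/

lemma nimAux_zero {G : MGraph} (h : G.size = 0) (f : ℕ) : nimAux f G = 0 := by
  have hv : G.verts = ∅ := Finset.card_eq_zero.mp (by unfold size at h; omega)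
  have he : G.edges = ∅ := Finset.card_eq_zero.mp (by unfold size at h; omega)
  cases f with
  | zero => rfl
  | succ n =>
    simp only [nimAux, hv, he, Finset.image_empty, Finset.union_empty]
    exact mex_empty

lemma nimAux_congr : ∀ (m n : ℕ) (G : MGraph), G.size ≤ m → G.size ≤ n →
    nimAux m G = nimAux n G := by
  intro m
  induction m using Nat.strong_induction_on with
  | _ m IH =>
    intro n G hm hn
    match m, n with
    | 0, 0 => rfl
    | 0, n + 1 => rw [nimAux_zero (Nat.le_zero.mp hm), nimAux_zero (Nat.le_zero.mp hm)]
    | m + 1, 0 => rw [nimAux_zero (Nat.le_zero.mp hn), nimAux_zero (Nat.le_zero.mp hn)]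
    | m + 1, n + 1 =>
      simp only [nimAux]
      congr 1
      congr 1
      · refine Finset.image_congr fun v hv => ?_
        have hv' : v ∈ G.verts := hv
        have hlt := size_delVert_lt (G := G) hv'
        exact IH m (Nat.lt_succ_self m) n _ (by omega) (by omega)
      · refine Finset.image_congr fun e he => ?_
        have he' : e ∈ G.edges := he
        have hlt := size_delEdge_lt (G := G) he'
        exact IH m (Nat.lt_succ_self m) n _ (by omega) (by omega)

lemma nim_def (G : MGraph) :
    G.nim = mex ((G.verts.image fun v => (G.delVert v).nim) ∪
      (G.edges.image fun e => (G.delEdge e).nim)) := by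
  show nimAux G.size G = _
  rcases h : G.size with _ | s
  · have hv : G.verts = ∅ := Finset.card_eq_zero.mp (by unfold size at h; omega)
    have he : G.edges = ∅ := Finset.card_eq_zero.mp (by unfold size at h; omega)
    rw [hv, he]
    simp only [Finset.image_empty, Finset.union_empty]
    rw [mex_empty]; rfl
  · simp only [nimAux]
    congr 1
    congr 1
    · refine Finset.image_congr fun v hv => ?_
      have hv' : v ∈ G.verts := hv
      have hlt := size_delVert_lt (G := G) hv'
      exact nimAux_congr s _ _ (by omega) le_rfl
    · refine Finset.image_congr fun e he => ?_
      have he' : e ∈ G.edges := he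
      have hlt := size_delEdge_lt (G := G) he'
      exact nimAux_congr s _ _ (by omega) le_rfl

/-! #### Nice automorphisms -/

structure Nice (G : MGraph) (τ : Iso G G) : Prop where
  wf : G.WF
  hv : ∀ v ∈ G.verts, τ.vmap (τ.vmap v) = v
  he : ∀ e ∈ G.edges, τ.emap (τ.emap e) = e
  hadj : ∀ v ∈ G.verts, ¬ G.Adj v (τ.vmap v)

lemma Nice.vmem {G : MGraph} {τ : Iso G G} (_N : Nice G τ) {v : ℕ} (h : v ∈ G.verts) :
    τ.vmap v ∈ G.verts :=
  Finset.mem_coe.mp (τ.vmap_bij.mapsTo (Finset.mem_coe.mpr h))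

lemma Nice.emem {G : MGraph} {τ : Iso G G} (_N : Nice G τ) {e : ℕ} (h : e ∈ G.edges) :
    τ.emap e ∈ G.edges :=
  Finset.mem_coe.mp (τ.emap_bij.mapsTo (Finset.mem_coe.mpr h))

lemma Nice.mem_ends_emap {G : MGraph} {τ : Iso G G} (N : Nice G τ) {e u : ℕ}
    (he' : e ∈ G.edges) (hu : u ∈ G.verts) :
    u ∈ G.ends (τ.emap e) ↔ τ.vmap u ∈ G.ends e := by
  rw [τ.ends_eq e he', Sym2.mem_map]
  constructor
  · rintro ⟨a, ha, rfl⟩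
    rwa [N.hv a (N.wf e he' a ha)]
  · intro h
    exact ⟨τ.vmap u, h, N.hv u hu⟩

lemma Nice.fixed_edge_not_mem {G : MGraph} {τ : Iso G G} (N : Nice G τ) {e v : ℕ}
    (he' : e ∈ G.edges) (hee : τ.emap e = e) (hvV : v ∈ G.verts) (hnf : τ.vmap v ≠ v) :
    v ∉ G.ends e ∧ τ.vmap v ∉ G.ends e := by
  have key : v ∈ G.ends e → False := by
    intro hmem
    have h2 : τ.vmap v ∈ G.ends e := by
      have h3 : τ.vmap v ∈ (G.ends e).map τ.vmap := Sym2.mem_map.mpr ⟨v, hmem, rfl⟩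
      rwa [← τ.ends_eq e he', hee] at h3
    have hz : G.ends e = s(v, τ.vmap v) :=
      (Sym2.mem_and_mem_iff (Ne.symm hnf)).mp ⟨hmem, h2⟩
    exact N.hadj v hvV ⟨e, he', hz⟩
  refine ⟨fun h => key h, fun h => key ?_⟩
  have h3 : τ.vmap (τ.vmap v) ∈ (G.ends e).map τ.vmap := Sym2.mem_map.mpr ⟨τ.vmap v, h, rfl⟩
  rwa [← τ.ends_eq e he', hee, N.hv v hvV] at h3

lemma bijOn_invol {f : ℕ → ℕ} {s : Finset ℕ}
    (h1 : ∀ x ∈ s, f x ∈ s) (h2 : ∀ x ∈ s, f (f x) = x) :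
    Set.BijOn f (s : Set ℕ) (s : Set ℕ) := by
  refine ⟨fun x hx => h1 x hx, fun a ha b hb hab => ?_, fun y hy => ⟨f y, h1 y hy, h2 y hy⟩⟩
  have ha' : a ∈ s := ha
  have hb' : b ∈ s := hb
  rw [← h2 a ha', hab, h2 b hb']

/-! #### The four move lemmas -/

lemma nice_delVert_fixed {G : MGraph} {τ : Iso G G} (N : Nice G τ) {v : ℕ}
    (hvV : v ∈ G.verts) (hfx : τ.vmap v = v) :
    ∃ τ' : Iso (G.delVert v) (G.delVert v),
      Nice (G.delVert v) τ' ∧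
      (G.delVert v).fixedSubgraph τ' = (G.fixedSubgraph τ).delVert v := by
  have hvm : ∀ u ∈ (G.delVert v).verts, τ.vmap u ∈ (G.delVert v).verts := by
    intro u hu
    simp only [delVert, Finset.mem_erase] at hu ⊢
    refine ⟨fun hEq => hu.1 ?_, N.vmem hu.2⟩
    calc u = τ.vmap (τ.vmap u) := (N.hv u hu.2).symm
    _ = v := by rw [hEq, hfx]
  have hem : ∀ e ∈ (G.delVert v).edges, τ.emap e ∈ (G.delVert v).edges := by
    intro e he'
    simp only [delVert, Finset.mem_filter] at he' ⊢
    refine ⟨N.emem he'.1, fun hmem => he'.2 ?_⟩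
    rwa [N.mem_ends_emap he'.1 hvV, hfx] at hmem
  refine ⟨⟨τ.vmap, τ.emap,
      bijOn_invol hvm (fun x hx => N.hv x (Finset.mem_of_mem_erase hx)),
      bijOn_invol hem (fun e he' => N.he e (Finset.mem_filter.mp he').1),
      fun e he' => τ.ends_eq e (Finset.mem_filter.mp he').1⟩, ?_, ?_⟩
  · refine ⟨?_, ?_, ?_, ?_⟩
    · intro e he' u hu
      obtain ⟨heE, hnv⟩ := Finset.mem_filter.mp he'
      refine Finset.mem_erase.mpr ⟨fun hEq => hnv (hEq ▸ hu), N.wf e heE u hu⟩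
    · exact fun u hu => N.hv u (Finset.mem_of_mem_erase hu)
    · exact fun e he' => N.he e (Finset.mem_filter.mp he').1
    · rintro u hu ⟨e, heH, hend⟩
      exact N.hadj u (Finset.mem_of_mem_erase hu) ⟨e, (Finset.mem_filter.mp heH).1, hend⟩
  · refine ext' ?_ ?_ rfl
    · ext u
      simp only [fixedSubgraph, delVert, Finset.mem_filter, Finset.mem_erase]
      tauto
    · ext e
      simp only [fixedSubgraph, delVert.eq_def, Finset.mem_filter]
      tauto

lemma nice_delEdge_fixed {G : MGraph} {τ : Iso G G} (N : Nice G τ) {e : ℕ}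
    (heE : e ∈ G.edges) (hfx : τ.emap e = e) :
    ∃ τ' : Iso (G.delEdge e) (G.delEdge e),
      Nice (G.delEdge e) τ' ∧
      (G.delEdge e).fixedSubgraph τ' = (G.fixedSubgraph τ).delEdge e := by
  have hem : ∀ e' ∈ (G.delEdge e).edges, τ.emap e' ∈ (G.delEdge e).edges := by
    intro e' he'
    simp only [delEdge, Finset.mem_erase] at he' ⊢
    refine ⟨fun hEq => he'.1 ?_, N.emem he'.2⟩
    calc e' = τ.emap (τ.emap e') := (N.he e' he'.2).symm
    _ = e := by rw [hEq, hfx]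
  refine ⟨⟨τ.vmap, τ.emap, τ.vmap_bij,
      bijOn_invol hem (fun x hx => N.he x (Finset.mem_of_mem_erase hx)),
      fun e' he' => τ.ends_eq e' (Finset.mem_of_mem_erase he')⟩, ?_, ?_⟩
  · refine ⟨?_, ?_, ?_, ?_⟩
    · exact fun e' he' u hu => N.wf e' (Finset.mem_of_mem_erase he') u hu
    · exact fun u hu => N.hv u hu
    · exact fun e' he' => N.he e' (Finset.mem_of_mem_erase he')
    · rintro u hu ⟨e', heH, hend⟩
      exact N.hadj u hu ⟨e', Finset.mem_of_mem_erase heH, hend⟩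
  · refine ext' rfl ?_ rfl
    ext e'
    simp only [fixedSubgraph, delEdge, Finset.mem_filter, Finset.mem_erase]
    tauto

lemma nice_delVert_pair {G : MGraph} {τ : Iso G G} (N : Nice G τ) {v : ℕ}
    (hvV : v ∈ G.verts) (hnf : τ.vmap v ≠ v) :
    τ.vmap v ∈ (G.delVert v).verts ∧
    ∃ τ' : Iso ((G.delVert v).delVert (τ.vmap v)) ((G.delVert v).delVert (τ.vmap v)),
      Nice ((G.delVert v).delVert (τ.vmap v)) τ' ∧
      ((G.delVert v).delVert (τ.vmap v)).fixedSubgraph τ' = G.fixedSubgraph τ := by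
  have htvV : τ.vmap v ∈ G.verts := N.vmem hvV
  refine ⟨Finset.mem_erase.mpr ⟨hnf, htvV⟩, ?_⟩
  have hvm : ∀ u ∈ ((G.delVert v).delVert (τ.vmap v)).verts,
      τ.vmap u ∈ ((G.delVert v).delVert (τ.vmap v)).verts := by
    intro u hu
    simp only [delVert, Finset.mem_erase] at hu ⊢
    obtain ⟨hne2, hne1, huV⟩ := hu
    refine ⟨fun hEq => hne1 ?_, fun hEq => hne2 ?_, N.vmem huV⟩
    · calc u = τ.vmap (τ.vmap u) := (N.hv u huV).symm
      _ = v := by rw [hEq, N.hv v hvV]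
    · calc u = τ.vmap (τ.vmap u) := (N.hv u huV).symm
      _ = τ.vmap v := by rw [hEq]
  have hem : ∀ e ∈ ((G.delVert v).delVert (τ.vmap v)).edges,
      τ.emap e ∈ ((G.delVert v).delVert (τ.vmap v)).edges := by
    intro e he'
    simp only [delVert.eq_def, Finset.mem_filter] at he' ⊢
    obtain ⟨⟨heE, h1⟩, h2⟩ := he'
    refine ⟨⟨N.emem heE, fun hmem => h2 ?_⟩, fun hmem => h1 ?_⟩
    · rwa [N.mem_ends_emap heE hvV] at hmem
    · rwa [N.mem_ends_emap heE htvV, N.hv v hvV] at hmem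
  have hmemV : ∀ u ∈ ((G.delVert v).delVert (τ.vmap v)).verts, u ∈ G.verts := by
    intro u hu
    simp only [delVert, Finset.mem_erase] at hu
    exact hu.2.2
  have hmemE : ∀ e, e ∈ ((G.delVert v).delVert (τ.vmap v)).edges →
      e ∈ G.edges ∧ v ∉ G.ends e ∧ τ.vmap v ∉ G.ends e := by
    intro e he'
    simp only [delVert.eq_def, Finset.mem_filter] at he'
    exact ⟨he'.1.1, he'.1.2, he'.2⟩
  refine ⟨⟨τ.vmap, τ.emap,
      bijOn_invol hvm (fun x hx => N.hv x (hmemV x hx)),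
      bijOn_invol hem (fun e he' => N.he e (hmemE e he').1),
      fun e he' => τ.ends_eq e (hmemE e he').1⟩, ?_, ?_⟩
  · refine ⟨?_, ?_, ?_, ?_⟩
    · intro e he' u hu
      obtain ⟨heE, h1, h2⟩ := hmemE e he'
      simp only [delVert, Finset.mem_erase]
      exact ⟨fun hEq => h2 (hEq ▸ hu), fun hEq => h1 (hEq ▸ hu), N.wf e heE u hu⟩
    · exact fun u hu => N.hv u (hmemV u hu)
    · exact fun e he' => N.he e (hmemE e he').1
    · rintro u hu ⟨e, heH, hend⟩
      exact N.hadj u (hmemV u hu) ⟨e, (hmemE e heH).1, hend⟩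
  · refine ext' ?_ ?_ rfl
    · ext u
      simp only [fixedSubgraph, delVert, Finset.mem_filter, Finset.mem_erase]
      constructor
      · rintro ⟨⟨h2, h1, huV⟩, hfix⟩
        exact ⟨huV, hfix⟩
      · rintro ⟨huV, hfix⟩
        have hne1 : u ≠ v := fun hEq => hnf (by rw [← hEq]; exact hfix)
        have hne2 : u ≠ τ.vmap v := by
          intro hEq
          subst hEq
          rw [N.hv v hvV] at hfix
          exact hnf hfix.symm
        exact ⟨⟨hne2, hne1, huV⟩, hfix⟩
    · ext e
      simp only [fixedSubgraph, delVert.eq_def, Finset.mem_filter]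
      constructor
      · rintro ⟨⟨⟨heE, _⟩, _⟩, hfix⟩
        exact ⟨heE, hfix⟩
      · rintro ⟨heE, hfix⟩
        obtain ⟨k1, k2⟩ := N.fixed_edge_not_mem heE hfix hvV hnf
        exact ⟨⟨⟨heE, k1⟩, k2⟩, hfix⟩

lemma nice_delEdge_pair {G : MGraph} {τ : Iso G G} (N : Nice G τ) {e : ℕ}
    (heE : e ∈ G.edges) (hnf : τ.emap e ≠ e) :
    τ.emap e ∈ (G.delEdge e).edges ∧
    ∃ τ' : Iso ((G.delEdge e).delEdge (τ.emap e)) ((G.delEdge e).delEdge (τ.emap e)),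
      Nice ((G.delEdge e).delEdge (τ.emap e)) τ' ∧
      ((G.delEdge e).delEdge (τ.emap e)).fixedSubgraph τ' = G.fixedSubgraph τ := by
  refine ⟨Finset.mem_erase.mpr ⟨hnf, N.emem heE⟩, ?_⟩
  have hmemE : ∀ e', e' ∈ ((G.delEdge e).delEdge (τ.emap e)).edges →
      e' ∈ G.edges ∧ e' ≠ e ∧ e' ≠ τ.emap e := by
    intro e' he'
    simp only [delEdge, Finset.mem_erase] at he'
    exact ⟨he'.2.2, he'.2.1, he'.1⟩
  have hem : ∀ e' ∈ ((G.delEdge e).delEdge (τ.emap e)).edges,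
      τ.emap e' ∈ ((G.delEdge e).delEdge (τ.emap e)).edges := by
    intro e' he'
    obtain ⟨hE, h1, h2⟩ := hmemE e' he'
    simp only [delEdge, Finset.mem_erase]
    refine ⟨fun hEq => h1 ?_, fun hEq => h2 ?_, N.emem hE⟩
    · have h3 := congrArg τ.emap hEq
      rwa [N.he e' hE, N.he e heE] at h3
    · calc e' = τ.emap (τ.emap e') := (N.he e' hE).symm
      _ = τ.emap e := by rw [hEq]
  refine ⟨⟨τ.vmap, τ.emap, τ.vmap_bij,
      bijOn_invol hem (fun x hx => N.he x (hmemE x hx).1),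
      fun e' he' => τ.ends_eq e' (hmemE e' he').1⟩, ?_, ?_⟩
  · refine ⟨?_, ?_, ?_, ?_⟩
    · exact fun e' he' u hu => N.wf e' (hmemE e' he').1 u hu
    · exact fun u hu => N.hv u hu
    · exact fun e' he' => N.he e' (hmemE e' he').1
    · rintro u hu ⟨e', heH, hend⟩
      exact N.hadj u hu ⟨e', (hmemE e' heH).1, hend⟩
  · refine ext' rfl ?_ rfl
    ext e'
    simp only [fixedSubgraph, delEdge, Finset.mem_filter, Finset.mem_erase]
    constructor
    · rintro ⟨⟨_, _, hE⟩, hfix⟩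
      exact ⟨hE, hfix⟩
    · rintro ⟨hE, hfix⟩
      have hne1 : e' ≠ τ.emap e := by
        intro hEq
        subst hEq
        rw [N.he e heE] at hfix
        exact hnf hfix.symm
      have hne2 : e' ≠ e := by
        intro hEq
        subst hEq
        exact hnf hfix
      exact ⟨⟨hne1, hne2, hE⟩, hfix⟩
    
/-! #### The main induction -/

lemma nim_eq_fixed_aux : ∀ (n : ℕ) (G : MGraph), G.size ≤ n → ∀ τ : Iso G G,
    Nice G τ → G.nim = (G.fixedSubgraph τ).nim := by
  intro n
  induction n with
  | zero =>
    intro G hsize τ N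
    have h0 : G.size = 0 := Nat.le_zero.mp hsize
    have h1 : (G.fixedSubgraph τ).size = 0 := by
      have hv : G.verts = ∅ := Finset.card_eq_zero.mp (by unfold size at h0; omega)
      have he : G.edges = ∅ := Finset.card_eq_zero.mp (by unfold size at h0; omega)
      simp [size, fixedSubgraph, hv, he]
    unfold nim
    rw [h0, h1]
    rfl
  | succ n IH =>
    intro G hsize τ N
    rw [nim_def G]
    refine mex_eq ?_ ?_
    · -- ν(F) is not the value of any move of G
      intro hmem
      rw [Finset.mem_union] at hmem
      rcases hmem with hmem | hmem
      · obtain ⟨v, hvV, hval⟩ := Finset.mem_image.mp hmem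
        by_cases hfx : τ.vmap v = v
        · obtain ⟨τ', N', hfs⟩ := nice_delVert_fixed N hvV hfx
          have hb : (G.delVert v).size ≤ n := by
            have := size_delVert_lt (G := G) hvV; omega
          have h1 : (G.delVert v).nim = ((G.fixedSubgraph τ).delVert v).nim := by
            rw [← hfs]; exact IH _ hb τ' N'
          have hvF : v ∈ (G.fixedSubgraph τ).verts :=
            Finset.mem_filter.mpr ⟨hvV, hfx⟩
          have hmem' : ((G.fixedSubgraph τ).delVert v).nim ∈
              (((G.fixedSubgraph τ).verts.image fun u => ((G.fixedSubgraph τ).delVert u).nim) ∪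
               ((G.fixedSubgraph τ).edges.image fun e => ((G.fixedSubgraph τ).delEdge e).nim)) :=
            Finset.mem_union_left _ (Finset.mem_image_of_mem _ hvF)
          rw [← h1, hval] at hmem'
          exact mex_not_mem _ ((nim_def (G.fixedSubgraph τ)) ▸ hmem')
        · obtain ⟨htv, τ', N', hfs⟩ := nice_delVert_pair N hvV hfx
          have hb : ((G.delVert v).delVert (τ.vmap v)).size ≤ n := by
            have h1 := size_delVert_lt (G := G) hvV
            have h2 := size_delVert_lt (G := G.delVert v) htv
            omega
          have h1 : ((G.delVert v).delVert (τ.vmap v)).nim = (G.fixedSubgraph τ).nim := by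
            rw [← hfs]; exact IH _ hb τ' N'
          have hmem' : (G.fixedSubgraph τ).nim ∈
              (((G.delVert v).verts.image fun u => ((G.delVert v).delVert u).nim) ∪
               ((G.delVert v).edges.image fun e => ((G.delVert v).delEdge e).nim)) := by
            rw [← h1]
            exact Finset.mem_union_left _ (Finset.mem_image_of_mem _ htv)
          have := mex_not_mem (((G.delVert v).verts.image fun u => ((G.delVert v).delVert u).nim) ∪
               ((G.delVert v).edges.image fun e => ((G.delVert v).delEdge e).nim))
          rw [← nim_def (G.delVert v), hval] at this
          exact this hmem'
      · obtain ⟨e, heE, hval⟩ := Finset.mem_image.mp hmem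
        by_cases hfx : τ.emap e = e
        · obtain ⟨τ', N', hfs⟩ := nice_delEdge_fixed N heE hfx
          have hb : (G.delEdge e).size ≤ n := by
            have := size_delEdge_lt (G := G) heE; omega
          have h1 : (G.delEdge e).nim = ((G.fixedSubgraph τ).delEdge e).nim := by
            rw [← hfs]; exact IH _ hb τ' N'
          have heF : e ∈ (G.fixedSubgraph τ).edges :=
            Finset.mem_filter.mpr ⟨heE, hfx⟩
          have hmem' : ((G.fixedSubgraph τ).delEdge e).nim ∈
              (((G.fixedSubgraph τ).verts.image fun u => ((G.fixedSubgraph τ).delVert u).nim) ∪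
               ((G.fixedSubgraph τ).edges.image fun e' => ((G.fixedSubgraph τ).delEdge e').nim)) :=
            Finset.mem_union_right _ (Finset.mem_image_of_mem _ heF)
          rw [← h1, hval] at hmem'
          exact mex_not_mem _ ((nim_def (G.fixedSubgraph τ)) ▸ hmem')
        · obtain ⟨hte, τ', N', hfs⟩ := nice_delEdge_pair N heE hfx
          have hb : ((G.delEdge e).delEdge (τ.emap e)).size ≤ n := by
            have h1 := size_delEdge_lt (G := G) heE
            have h2 := size_delEdge_lt (G := G.delEdge e) hte
            omega
          have h1 : ((G.delEdge e).delEdge (τ.emap e)).nim = (G.fixedSubgraph τ).nim := by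
            rw [← hfs]; exact IH _ hb τ' N'
          have hmem' : (G.fixedSubgraph τ).nim ∈
              (((G.delEdge e).verts.image fun u => ((G.delEdge e).delVert u).nim) ∪
               ((G.delEdge e).edges.image fun e' => ((G.delEdge e).delEdge e').nim)) := by
            rw [← h1]
            exact Finset.mem_union_right _ (Finset.mem_image_of_mem _ hte)
          have := mex_not_mem (((G.delEdge e).verts.image fun u => ((G.delEdge e).delVert u).nim) ∪
               ((G.delEdge e).edges.image fun e' => ((G.delEdge e).delEdge e').nim))
          rw [← nim_def (G.delEdge e), hval] at this
          exact this hmem'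
    · -- every value below ν(F) is achieved by a move of G
      intro k hk
      rw [nim_def (G.fixedSubgraph τ)] at hk
      have hkmem := mem_of_lt_mex hk
      rw [Finset.mem_union] at hkmem
      rcases hkmem with hkmem | hkmem
      · obtain ⟨v, hvF, hval⟩ := Finset.mem_image.mp hkmem
        have hvF' : v ∈ G.verts ∧ τ.vmap v = v := by
          simp only [fixedSubgraph, Finset.mem_filter] at hvF; exact hvF
        obtain ⟨τ', N', hfs⟩ := nice_delVert_fixed N hvF'.1 hvF'.2
        have hb : (G.delVert v).size ≤ n := by
          have := size_delVert_lt (G := G) hvF'.1; omega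
        have h1 : (G.delVert v).nim = k := by
          rw [IH _ hb τ' N', hfs]; exact hval
        exact Finset.mem_union_left _ (Finset.mem_image.mpr ⟨v, hvF'.1, h1⟩)
      · obtain ⟨e, heF, hval⟩ := Finset.mem_image.mp hkmem
        have heF' : e ∈ G.edges ∧ τ.emap e = e := by
          simp only [fixedSubgraph, Finset.mem_filter] at heF; exact heF
        obtain ⟨τ', N', hfs⟩ := nice_delEdge_fixed N heF'.1 heF'.2
        have hb : (G.delEdge e).size ≤ n := by
          have := size_delEdge_lt (G := G) heF'.1; omega
        have h1 : (G.delEdge e).nim = k := by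
          rw [IH _ hb τ' N', hfs]; exact hval
        exact Finset.mem_union_right _ (Finset.mem_image.mpr ⟨e, heF'.1, h1⟩)

/-- The symmetry lemma: if `τ` is an involutive automorphism of the finite
graph `G` such that no vertex `v` is joined by an edge to `τ(v)`, then
`ν(G) = ν(G^τ)`. -/
theorem nim_eq_nim_fixedSubgraph (G : MGraph) (hWF : G.WF) (τ : Iso G G)
    (hv : ∀ v ∈ G.verts, τ.vmap (τ.vmap v) = v)
    (he : ∀ e ∈ G.edges, τ.emap (τ.emap e) = e)
    (hAdj : ∀ v ∈ G.verts, ¬ G.Adj v (τ.vmap v)) :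
    G.nim = (G.fixedSubgraph τ).nim :=
  nim_eq_fixed_aux G.size G le_rfl τ ⟨hWF, hv, he, hAdj⟩

end MGraph
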